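/- Let A be a coherent positively graded commutative ring, i.e. every finitely generated homogeneous ideal of A is finitely presented as an A-module. Then for any two finitely generated homogeneous ideals I and J of A, the intersection I ∩ J is again a finitely generated (homogeneous) ideal of A. -/
import Mathlib
set_option linter.unnecessarySimpa false

/-- Let `A` be a coherent positively graded commutative ring, i.e. every finitely generated
homogeneous ideal of `A` is finitely presented as an `A`-module. Then for any two finitely
generated homogeneous ideals `I` and `J` of `A`, the intersection `I ∩ J` is again a finitely
generated homogeneous ideal of `A`. -/
theorem coherent_inf_fg {R A : Type*} [CommSemiring R] [CommRing A] [Algebra R A]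
    (𝒜 : ℕ → Submodule R A) [GradedAlgebra 𝒜]
    (hcoh : ∀ I : Ideal A, I.IsHomogeneous 𝒜 → I.FG → Module.FinitePresentation A I)
    (I J : Ideal A) (hI : I.IsHomogeneous 𝒜) (hJ : J.IsHomogeneous 𝒜)
    (hIfg : I.FG) (hJfg : J.FG) :
    (I ⊓ J).IsHomogeneous 𝒜 ∧ (I ⊓ J).FG := by
  refine ⟨hI.inf hJ, ?_⟩
  have hfp : Module.FinitePresentation A ↥(I ⊔ J) :=
    hcoh (I ⊔ J) (hI.sup hJ) (Submodule.FG.sup hIfg hJfg)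
  have : Module.Finite A I := Module.Finite.iff_fg.mpr hIfg
  have : Module.Finite A J := Module.Finite.iff_fg.mpr hJfg
  set l : (I × J) →ₗ[A] ↥(I ⊔ J) :=
    LinearMap.coprod (Submodule.inclusion le_sup_left) (Submodule.inclusion le_sup_right)
  have hl : Function.Surjective l := by
    rintro ⟨x, hx⟩
    obtain ⟨y, hy, z, hz, rfl⟩ := Submodule.mem_sup.mp hx
    exact ⟨(⟨y, hy⟩, ⟨z, hz⟩), rfl⟩
  have hker : (LinearMap.ker l).FG := Module.FinitePresentation.fg_ker l hl
  have hmap : (LinearMap.ker l).map (I.subtype.comp (LinearMap.fst A I J)) = I ⊓ J := by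
    apply le_antisymm
    · rintro _ ⟨⟨x, y⟩, hxy, rfl⟩
      have h0 : (x : A) + (y : A) = 0 := congrArg Subtype.val hxy
      have hxv : (x : A) = -(y : A) := eq_neg_of_add_eq_zero_left h0
      exact ⟨x.2, by rw [SetLike.mem_coe, LinearMap.comp_apply]; simpa [hxv] using J.neg_mem y.2⟩
    · rintro x ⟨hx1, hx2⟩
      refine ⟨(⟨x, hx1⟩, ⟨-x, J.neg_mem hx2⟩), ?_, rfl⟩
      ext
      simp [l]
  rw [← hmap]
  exact hker.map _
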